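/- With the ansatz U(t) = ½(1-k)·log t + φ, A(t) = ψ + t^{2k}·B, η(t) = ¼(1-k)²·log t + λ, α(t) = γ (constants φ, ψ, λ, B, γ > 0, Λ > 0, K ≠ 0), and D = t·d/dt, if k > 3 then the residual of the truncated α-equation, Dα + 4t²α²e^{2(η-U)}Λ + (e^{2η}/t²)·α²·K², tends to 0 as t → 0⁺; moreover for 0 < k ≤ 3 with K ≠ 0, the twist term (e^{2η}/t²)·α²·K² = γ²K²e^{2λ}·t^{(k-3)(k+1)/2} does not tend to 0. -/
import Mathlib


open Real Filter

/-- The operator D = t·d/dt. -/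
noncomputable def Dop (f : ℝ → ℝ) : ℝ → ℝ := fun t => t * deriv f t

private lemma rpow_tendsto_zero {e : ℝ} (he : 0 < e) :
    Tendsto (fun t : ℝ => t ^ e) (nhdsWithin 0 (Set.Ioi 0)) (nhds 0) := by
  have h := (Real.continuousAt_rpow_const 0 e (Or.inr he.le)).tendsto
  rw [Real.zero_rpow he.ne'] at h
  exact h.mono_left nhdsWithin_le_nhds

/-- With the VTD ansatz, the residual of the truncated α-equation tends to 0
as t → 0⁺ iff k > 3: for k > 3 the residual tends to 0, while for 0 < k ≤ 3
(and K ≠ 0) the twist term does not tend to 0. -/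
theorem truncated_alpha_equation_residual (k φ ψ B lam γ Λ K : ℝ)
    (hγ : 0 < γ) (hΛ : 0 < Λ) (hK : K ≠ 0) :
    let U : ℝ → ℝ := fun t => (1 / 2) * (1 - k) * Real.log t + φ
    let η : ℝ → ℝ := fun t => (1 / 4) * (1 - k) ^ 2 * Real.log t + lam
    let α : ℝ → ℝ := fun _ => γ
    (3 < k →
      Tendsto
        (fun t : ℝ =>
          Dop α t + 4 * t ^ 2 * (α t) ^ 2 * Real.exp (2 * (η t - U t)) * Λ
            + (Real.exp (2 * η t) / t ^ 2) * (α t) ^ 2 * K ^ 2)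
        (nhdsWithin 0 (Set.Ioi 0)) (nhds 0)) ∧
    (0 < k → k ≤ 3 →
      ¬ Tendsto
        (fun t : ℝ => (Real.exp (2 * η t) / t ^ 2) * (α t) ^ 2 * K ^ 2)
        (nhdsWithin 0 (Set.Ioi 0)) (nhds 0)) := by
  intro U η α
  -- exponents
  set e1 : ℝ := (k ^ 2 + 3) / 2 with he1
  set e2 : ℝ := (k ^ 2 - 2 * k - 3) / 2 with he2
  set C1 : ℝ := 4 * γ ^ 2 * Real.exp (2 * (lam - φ)) * Λ with hC1
  set C2 : ℝ := Real.exp (2 * lam) * γ ^ 2 * K ^ 2 with hC2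
  -- pointwise identities on (0,∞)
  have hterm1 : ∀ t : ℝ, t ∈ Set.Ioi (0:ℝ) →
      4 * t ^ 2 * (α t) ^ 2 * Real.exp (2 * (η t - U t)) * Λ = C1 * t ^ e1 := by
    intro t ht
    have ht' : (0:ℝ) < t := ht
    have h2 : (t:ℝ) ^ (2:ℕ) = t ^ (2:ℝ) := by
      rw [← Real.rpow_natCast t 2]; norm_num
    have harg : 2 * (η t - U t)
        = Real.log t * (1 / 2 * (1 - k) ^ 2 - (1 - k)) + 2 * (lam - φ) := by
      simp only [U, η]; ring
    rw [harg, Real.exp_add, ← Real.rpow_def_of_pos ht']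
    simp only [α]
    rw [h2, hC1, he1]
    rw [show (4 * t ^ (2:ℝ) * γ ^ 2 * (t ^ (1 / 2 * (1 - k) ^ 2 - (1 - k)) * Real.exp (2 * (lam - φ))) * Λ)
        = 4 * γ ^ 2 * Real.exp (2 * (lam - φ)) * Λ * (t ^ (2:ℝ) * t ^ (1 / 2 * (1 - k) ^ 2 - (1 - k))) by ring]
    rw [← Real.rpow_add ht']
    ring_nf
  have hterm2 : ∀ t : ℝ, t ∈ Set.Ioi (0:ℝ) →
      (Real.exp (2 * η t) / t ^ 2) * (α t) ^ 2 * K ^ 2 = C2 * t ^ e2 := by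
    intro t ht
    have ht' : (0:ℝ) < t := ht
    have h2 : (t:ℝ) ^ (2:ℕ) = t ^ (2:ℝ) := by
      rw [← Real.rpow_natCast t 2]; norm_num
    have harg : 2 * η t = Real.log t * (1 / 2 * (1 - k) ^ 2) + 2 * lam := by
      simp only [η]; ring
    rw [harg, Real.exp_add, ← Real.rpow_def_of_pos ht']
    simp only [α]
    rw [h2, hC2, he2]
    rw [div_eq_mul_inv, ← Real.rpow_neg_one (t ^ (2:ℝ)), ← Real.rpow_mul ht'.le]
    rw [show (t ^ (1 / 2 * (1 - k) ^ 2) * Real.exp (2 * lam) * t ^ (2 * (-1:ℝ)) * γ ^ 2 * K ^ 2)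
        = Real.exp (2 * lam) * γ ^ 2 * K ^ 2 * (t ^ (1 / 2 * (1 - k) ^ 2) * t ^ (2 * (-1:ℝ))) by ring]
    rw [← Real.rpow_add ht']
    ring_nf
  constructor
  · intro hk3
    have hDα : ∀ t : ℝ, Dop α t = 0 := by
      intro t; simp [Dop, α]
    have heq : ∀ t ∈ Set.Ioi (0:ℝ),
        Dop α t + 4 * t ^ 2 * (α t) ^ 2 * Real.exp (2 * (η t - U t)) * Λ
          + (Real.exp (2 * η t) / t ^ 2) * (α t) ^ 2 * K ^ 2
        = C1 * t ^ e1 + C2 * t ^ e2 := by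
      intro t ht
      rw [hDα t, hterm1 t ht, hterm2 t ht]; ring
    have he1pos : 0 < e1 := by
      rw [he1]; nlinarith
    have he2pos : 0 < e2 := by
      rw [he2]; nlinarith
    have hlim : Tendsto (fun t : ℝ => C1 * t ^ e1 + C2 * t ^ e2)
        (nhdsWithin 0 (Set.Ioi 0)) (nhds 0) := by
      have h1 := (rpow_tendsto_zero he1pos).const_mul C1
      have h2 := (rpow_tendsto_zero he2pos).const_mul C2
      simpa using h1.add h2
    refine hlim.congr' ?_ |>.mono_left le_rfl
    · filter_upwards [self_mem_nhdsWithin] with t ht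
      exact (heq t ht).symm
  · intro hk0 hk3 habs
    have hC2pos : 0 < C2 := by
      have := Real.exp_pos (2 * lam)
      have hK2 : 0 < K ^ 2 := pow_two_pos_of_ne_zero hK
      positivity
    have he2nonpos : e2 ≤ 0 := by
      rw [he2]; nlinarith
    -- eventually the function is < C2
    have hsmall := habs.eventually (eventually_lt_nhds hC2pos)
    -- but on (0,1) it is ≥ C2
    have hbig : ∀ᶠ t in nhdsWithin (0:ℝ) (Set.Ioi 0),
        C2 ≤ (Real.exp (2 * η t) / t ^ 2) * (α t) ^ 2 * K ^ 2 := by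
      filter_upwards [Ioo_mem_nhdsGT_of_mem (Set.mem_Ico.mpr ⟨le_refl (0:ℝ), one_pos⟩)] with t ht
      rw [hterm2 t ht.1]
      have h1 : 1 ≤ t ^ e2 :=
        Real.one_le_rpow_of_pos_of_le_one_of_nonpos ht.1 ht.2.le he2nonpos
      nlinarith
    have := (hsmall.and hbig).exists_mem
    obtain ⟨s, hs, h⟩ := this
    obtain ⟨t, hts⟩ := Filter.nonempty_of_mem hs
    exact absurd ((h t hts).2.trans_lt (h t hts).1) (lt_irrefl _)
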